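/- (Gordan's Theorem) For any real m × n matrix M, exactly one of the following holds: either there exists a nonzero vector x ∈ ℝ^n with x ≥ 0 componentwise and Mx = 0, or there exists y ∈ ℝ^m such that every entry of M^T y is strictly positive. -/

import Mathlib

open Matrix

lemma gordan_not_both (m n : ℕ) (M : Matrix (Fin m) (Fin n) ℝ)
    (hA : ∃ x : Fin n → ℝ, x ≠ 0 ∧ (∀ i, 0 ≤ x i) ∧ M.mulVec x = 0)
    (hB : ∃ y : Fin m → ℝ, ∀ j, 0 < Mᵀ.mulVec y j) : False := by
  obtain ⟨x, hx0, hxnn, hMx⟩ := hA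
  obtain ⟨y, hy⟩ := hB
  have key : (∑ j, x j * Mᵀ.mulVec y j) = ∑ i, y i * M.mulVec x i := by
    simp only [Matrix.mulVec, dotProduct, Matrix.transpose_apply]
    simp_rw [Finset.mul_sum]
    rw [Finset.sum_comm]
    refine Finset.sum_congr rfl fun i _ => Finset.sum_congr rfl fun j _ => by ring
  have hz : (∑ j, x j * Mᵀ.mulVec y j) = 0 := by
    rw [key, hMx]; simp
  have hpos : 0 < ∑ j, x j * Mᵀ.mulVec y j := by
    obtain ⟨j0, hj0⟩ : ∃ j, x j ≠ 0 := by
      by_contra h; push_neg at h; exact hx0 (funext h)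
    apply Finset.sum_pos'
    · intro j _; exact mul_nonneg (hxnn j) (hy j).le
    · exact ⟨j0, Finset.mem_univ j0, mul_pos ((hxnn j0).lt_of_ne (Ne.symm hj0)) (hy j0)⟩
  exact absurd hz hpos.ne'

lemma gordan_exists (m n : ℕ) (M : Matrix (Fin m) (Fin n) ℝ)
    (hB : ¬ ∃ y : Fin m → ℝ, ∀ j, 0 < Mᵀ.mulVec y j) :
    ∃ x : Fin n → ℝ, x ≠ 0 ∧ (∀ i, 0 ≤ x i) ∧ M.mulVec x = 0 := by
  classical
  set v : Fin n → (Fin m → ℝ) := fun j i => M i j with hv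
  -- 0 must lie in the convex hull of the columns of M
  have h0 : (0 : Fin m → ℝ) ∈ convexHull ℝ (Set.range v) := by
    by_contra h0
    have hfin : (Set.range v).Finite := Set.finite_range v
    obtain ⟨f, u, hfu, hu0⟩ :=
      geometric_hahn_banach_closed_point (convex_convexHull ℝ _)
        (hfin.isClosed_convexHull (𝕜 := ℝ)) h0
    rw [map_zero] at hu0
    refine hB ⟨fun i => -(f (Pi.single i (1:ℝ))), fun j => ?_⟩
    have hvj : f (v j) < 0 :=
      lt_trans (hfu _ (subset_convexHull ℝ _ ⟨j, rfl⟩)) hu0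
    have hrepr : v j = ∑ i, (v j i) • (Pi.single i (1:ℝ) : Fin m → ℝ) := by
      ext i'
      simp [Finset.sum_apply, Pi.single_apply, Finset.sum_ite_eq', mul_comm]
    have hmv : Mᵀ.mulVec (fun i => -(f (Pi.single i (1:ℝ)))) j = -(f (v j)) := by
      conv_rhs => rw [hrepr]
      rw [map_sum]
      simp only [Matrix.mulVec, dotProduct, Matrix.transpose_apply,
        _root_.map_smul, smul_eq_mul, ← Finset.sum_neg_distrib]
      refine Finset.sum_congr rfl fun i _ => ?_
      show M i j * -f (Pi.single i 1) = -(v j i * f (Pi.single i 1))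
      simp [hv]
    rw [hmv]
    linarith
  rw [mem_convexHull_iff_exists_fintype] at h0
  obtain ⟨ι, _, w, z, hw0, hw1, hz, hsum⟩ := h0
  choose g hg using hz
  refine ⟨fun j => ∑ i, if g i = j then w i else 0, ?_, ?_, ?_⟩
  · intro h
    have h1 : (1 : ℝ) = 0 := by
      calc (1:ℝ) = ∑ i, w i := hw1.symm
        _ = ∑ j, ∑ i, if g i = j then w i else 0 := by
              rw [Finset.sum_comm]
              refine Finset.sum_congr rfl fun i _ => ?_
              simp [Finset.sum_ite_eq']
        _ = ∑ j : Fin n, (0:ℝ) := Finset.sum_congr rfl fun j _ => congrFun h j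
        _ = 0 := by simp
    norm_num at h1
  · intro j
    exact Finset.sum_nonneg fun i _ => by by_cases h : g i = j <;> simp [h, hw0 i]
  · funext i'
    have hs := congrFun hsum i'
    simp only [Finset.sum_apply, Pi.smul_apply, smul_eq_mul, Pi.zero_apply] at hs
    simp only [Matrix.mulVec, dotProduct, Pi.zero_apply]
    calc ∑ j, M i' j * ∑ i, (if g i = j then w i else 0)
        = ∑ i, w i * z i i' := by
          simp_rw [Finset.mul_sum]
          rw [Finset.sum_comm]
          refine Finset.sum_congr rfl fun i _ => ?_
          rw [← hg i]
          simp [mul_ite, Finset.sum_ite_eq, mul_comm, hv]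
      _ = 0 := hs

/-- Gordan's theorem: exactly one of the two alternatives holds. -/
theorem stmt_2 (m n : ℕ) (M : Matrix (Fin m) (Fin n) ℝ) :
    Xor' (∃ x : Fin n → ℝ, x ≠ 0 ∧ (∀ i, 0 ≤ x i) ∧ M.mulVec x = 0)
         (∃ y : Fin m → ℝ, ∀ j, 0 < Mᵀ.mulVec y j) := by
  by_cases hB : ∃ y : Fin m → ℝ, ∀ j, 0 < Mᵀ.mulVec y j
  · exact Or.inr ⟨hB, fun hA => gordan_not_both m n M hA hB⟩
  · exact Or.inl ⟨gordan_exists m n M hB, hB⟩
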